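/- Suppose for n ≥ 2 the Legendre polynomial P_n satisfies P_n(t) > 0 and P_n'(t)/P_n(t) ≤ 2n²/(t + (2n−1)√(t²−1)) for all t ≥ 1. Then P_n(t) ≤ (t+√(t²−1))^{n(2n−1)/(2(n−1))} · (t + (2n−1)√(t²−1))^{−n/(2(n−1))} for all t ≥ 1. -/

import Mathlib

open Real Set

lemma sqrt_deriv_aux (s : ℝ) (hs : 1 < s) :
    HasDerivAt (fun x : ℝ => Real.sqrt (x ^ 2 - 1)) (s / Real.sqrt (s ^ 2 - 1)) s := by
  have hs1 : (0:ℝ) < s ^ 2 - 1 := by nlinarith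
  have h1 : HasDerivAt (fun x : ℝ => x ^ 2 - 1) (2 * s) s := by
    simpa using ((hasDerivAt_pow 2 s).sub_const 1)
  have h2 := (Real.hasDerivAt_sqrt (ne_of_gt hs1)).comp s h1
  have hv : Real.sqrt (s ^ 2 - 1) ≠ 0 := ne_of_gt (Real.sqrt_pos.2 hs1)
  refine h2.congr_deriv ?_
  field_simp

lemma log_term_deriv (c s : ℝ) (hs : 1 < s) (hy : s + c * Real.sqrt (s ^ 2 - 1) ≠ 0) :
    HasDerivAt (fun x : ℝ => Real.log (x + c * Real.sqrt (x ^ 2 - 1)))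
      ((1 + c * (s / Real.sqrt (s ^ 2 - 1))) / (s + c * Real.sqrt (s ^ 2 - 1))) s := by
  have h1 : HasDerivAt (fun x : ℝ => x + c * Real.sqrt (x ^ 2 - 1))
      (1 + c * (s / Real.sqrt (s ^ 2 - 1))) s :=
    (hasDerivAt_id' s).add ((sqrt_deriv_aux s hs).const_mul c)
  exact h1.log hy

theorem stmt_17 (n : ℕ) (hn : 2 ≤ n) (P : ℝ → ℝ)
    (hP1 : P 1 = 1)
    (hdiff : ∀ t, 1 ≤ t → DifferentiableAt ℝ P t)
    (hpos : ∀ t, 1 ≤ t → 0 < P t)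
    (hbound : ∀ t, 1 ≤ t →
      deriv P t / P t ≤ 2 * n ^ 2 / (t + (2 * n - 1) * Real.sqrt (t ^ 2 - 1))) :
    ∀ t, 1 ≤ t →
      P t ≤ (t + Real.sqrt (t ^ 2 - 1)) ^ ((n : ℝ) * (2 * n - 1) / (2 * (n - 1))) *
        (t + (2 * n - 1) * Real.sqrt (t ^ 2 - 1)) ^ (-(n : ℝ) / (2 * (n - 1))) := by
  intro t ht
  have hN2 : (2:ℝ) ≤ (n:ℝ) := by exact_mod_cast hn
  have hN1 : (0:ℝ) < (n:ℝ) - 1 := by linarith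
  have hc1 : (1:ℝ) ≤ 2 * (n:ℝ) - 1 := by linarith
  -- positivity of the two log arguments
  have hx : ∀ s : ℝ, 1 ≤ s → 0 < s + Real.sqrt (s ^ 2 - 1) := by
    intro s hs
    have := Real.sqrt_nonneg (s ^ 2 - 1)
    linarith
  have hy : ∀ s : ℝ, 1 ≤ s → 0 < s + (2 * (n:ℝ) - 1) * Real.sqrt (s ^ 2 - 1) := by
    intro s hs
    have h0 := Real.sqrt_nonneg (s ^ 2 - 1)
    nlinarith
  set a : ℝ := (n : ℝ) * (2 * (n:ℝ) - 1) / (2 * ((n:ℝ) - 1)) with hadef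
  set b : ℝ := -(n : ℝ) / (2 * ((n:ℝ) - 1)) with hbdef
  set H : ℝ → ℝ := fun s => a * Real.log (s + Real.sqrt (s ^ 2 - 1))
      + b * Real.log (s + (2 * (n:ℝ) - 1) * Real.sqrt (s ^ 2 - 1)) with hHdef
  have hderivH : ∀ s : ℝ, 1 < s →
      HasDerivAt H (2 * (n:ℝ) ^ 2 / (s + (2 * (n:ℝ) - 1) * Real.sqrt (s ^ 2 - 1))) s := by
    intro s hs
    have hs1 : (0:ℝ) < s ^ 2 - 1 := by nlinarith
    have hvpos : 0 < Real.sqrt (s ^ 2 - 1) := Real.sqrt_pos.2 hs1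
    have hL1 := log_term_deriv 1 s hs (by have := hx s hs.le; rw [one_mul]; linarith)
    have hL2 := log_term_deriv (2 * (n:ℝ) - 1) s hs (ne_of_gt (hy s hs.le))
    rw [show (fun x : ℝ => Real.log (x + 1 * Real.sqrt (x ^ 2 - 1)))
        = fun x : ℝ => Real.log (x + Real.sqrt (x ^ 2 - 1)) by funext x; rw [one_mul]] at hL1
    have hcomb := (hL1.const_mul a).add (hL2.const_mul b)
    refine hcomb.congr_deriv ?_
    have hxne := ne_of_gt (hx s hs.le)
    have hyne := ne_of_gt (hy s hs.le)
    have hvne := ne_of_gt hvpos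
    rw [hadef, hbdef]
    have hv2 := Real.sq_sqrt hs1.le
    have hNne : (n:ℝ) - 1 ≠ 0 := ne_of_gt hN1
    generalize Real.sqrt (s ^ 2 - 1) = v at *
    field_simp
    have hyne' : s + ((n:ℝ) * 2 - 1) * v ≠ 0 := by rw [mul_comm (n:ℝ) 2]; exact hyne
    field_simp
    ring
  set D : ℝ → ℝ := fun s => H s - Real.log (P s) with hDdef
  have hcontH : ContinuousOn H (Icc 1 t) := by
    have hcv : Continuous fun s : ℝ => Real.sqrt (s ^ 2 - 1) :=
      Real.continuous_sqrt.comp (by continuity)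
    apply ContinuousOn.add
    · exact continuousOn_const.mul (ContinuousOn.log
        ((continuous_id.add hcv).continuousOn) (fun s hs => ne_of_gt (hx s hs.1)))
    · exact continuousOn_const.mul (ContinuousOn.log
        ((continuous_id.add (continuous_const.mul hcv)).continuousOn)
        (fun s hs => ne_of_gt (hy s hs.1)))
  have hcontP : ContinuousOn (fun s => Real.log (P s)) (Icc 1 t) := by
    apply ContinuousOn.log
    · exact fun s hs => ((hdiff s hs.1).continuousAt).continuousWithinAt
    · exact fun s hs => ne_of_gt (hpos s hs.1)
  have hderivD : ∀ s ∈ Ioo (1:ℝ) t,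
      HasDerivAt D (2 * (n:ℝ) ^ 2 / (s + (2 * (n:ℝ) - 1) * Real.sqrt (s ^ 2 - 1))
        - deriv P s / P s) s := by
    intro s hs
    have h2 : HasDerivAt (fun x => Real.log (P x)) (deriv P s / P s) s :=
      ((hdiff s hs.1.le).hasDerivAt).log (ne_of_gt (hpos s hs.1.le))
    exact (hderivH s hs.1).sub h2
  have hmono : MonotoneOn D (Icc 1 t) := by
    apply monotoneOn_of_deriv_nonneg (convex_Icc 1 t) (hcontH.sub hcontP)
    · intro s hs
      rw [interior_Icc] at hs
      exact ((hderivD s hs).differentiableAt).differentiableWithinAt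
    · intro s hs
      rw [interior_Icc] at hs
      change 0 ≤ deriv D s
      rw [(hderivD s hs).deriv]
      have hb := hbound s hs.1.le
      linarith
  have hD1 : D 1 = 0 := by
    simp only [hDdef, hHdef, hP1]
    norm_num
  have hDt : 0 ≤ D t := by
    rw [← hD1]
    exact hmono ⟨le_refl 1, ht⟩ ⟨ht, le_refl t⟩ ht
  have key : Real.log (P t) ≤ H t := by
    simp only [hDdef] at hDt
    linarith
  have hxt := hx t ht
  have hyt := hy t ht
  rw [Real.rpow_def_of_pos hxt, Real.rpow_def_of_pos hyt, ← Real.exp_add]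
  calc P t = Real.exp (Real.log (P t)) := (Real.exp_log (hpos t ht)).symm
    _ ≤ _ := by
        apply Real.exp_le_exp.2
        refine le_trans key (le_of_eq ?_)
        simp only [hHdef]
        ring
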